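/- For all integers n ≥ 1 and 0 ≤ μ ≤ n one has 2·C(n,0) = ∑_{k=0}^{2n} C(2n,k)·(−1)^k·[k choose n]·[k−μ choose n], where [y choose n] = y(y−1)···(y−n+1)/n! is the generalized binomial coefficient evaluated at the integer y (and C denotes the super Catalan number on the left, the ordinary binomial coefficient elsewhere). -/

import Mathlib

/-- The super Catalan number `C(m,k) = (2m)!·(2k)!/(2·m!·k!·(m+k)!)`. -/
def superCatalan (m k : ℕ) : ℚ :=
  (((2 * m).factorial : ℚ) * ((2 * k).factorial : ℚ)) /
    (2 * (m.factorial : ℚ) * (k.factorial : ℚ) * ((m + k).factorial : ℚ))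

/-- The generalized binomial coefficient `[y choose n] = y(y−1)⋯(y−n+1)/n!` for rational `y`. -/
def genBinom (y : ℚ) (n : ℕ) : ℚ :=
  (∏ i ∈ Finset.range n, (y - (i : ℚ))) / (n.factorial : ℚ)

open Polynomial Finset

private lemma aux_nd15 : (X + 1 : ℚ[X]).natDegree = 1 := by
  rw [← C_1]; exact natDegree_X_add_C 1

private lemma aux_lc15 : (X + 1 : ℚ[X]).leadingCoeff = 1 := by
  rw [← C_1]; exact leadingCoeff_X_add_C 1

/-- The alternating binomial sum of a polynomial of degree `< m` vanishes. -/
private lemma alt_sum_zero15 : ∀ m : ℕ, ∀ p : ℚ[X], p.degree < (m : WithBot ℕ) →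
    ∑ k ∈ Finset.range (m+1), ((m.choose k : ℚ)) * (-1)^k * p.eval (k : ℚ) = 0 := by
  intro m
  induction m with
  | zero =>
    intro p hp
    have h0 : p = 0 := by
      rw [← Polynomial.degree_eq_bot]
      exact Nat.WithBot.lt_zero_iff.mp (by simpa using hp)
    simp [h0]
  | succ m ih =>
    intro p hp
    have hq : (p - p.comp (X + 1)).degree < (m : WithBot ℕ) := by
      by_cases h0 : p = 0
      · simp only [h0, Polynomial.zero_comp, sub_zero, degree_zero]
        exact WithBot.bot_lt_coe m
      · have hlc : (p.comp (X + 1)).leadingCoeff = p.leadingCoeff := by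
          rw [leadingCoeff_comp (by rw [aux_nd15]; norm_num), aux_lc15, one_pow, mul_one]
        have hc0 : p.comp (X + 1) ≠ 0 := by
          intro h
          apply h0
          rw [← leadingCoeff_eq_zero, ← hlc, h, leadingCoeff_zero]
        have hdc : (p.comp (X + 1)).degree = p.degree := by
          rw [degree_eq_natDegree hc0, degree_eq_natDegree h0, natDegree_comp, aux_nd15, mul_one]
        have h1 : (p - p.comp (X + 1)).degree < p.degree :=
          degree_sub_lt hdc.symm h0 hlc.symm
        have h2 : p.degree ≤ (m : WithBot ℕ) := by
          rw [degree_eq_natDegree h0] at hp ⊢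
          exact_mod_cast Nat.lt_succ_iff.mp (by exact_mod_cast hp)
        exact lt_of_lt_of_le h1 h2
    have hIH := ih _ hq
    simp only [eval_sub, eval_comp, eval_add, eval_X, eval_one] at hIH
    rw [Finset.sum_range_succ' (fun k => (((m+1).choose k : ℚ)) * (-1)^k * p.eval (k : ℚ)) (m+1)]
    have h1 : ∑ k ∈ range (m+1),
        (fun k => (((m+1).choose k : ℚ)) * (-1)^k * p.eval (k : ℚ)) (k+1)
        = (∑ k ∈ range (m+1), (m.choose k:ℚ)*(-1)^k*(p.eval (k:ℚ) - p.eval ((k:ℚ)+1)))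
          - (∑ k ∈ range (m+1), (m.choose k:ℚ)*(-1)^k*p.eval (k:ℚ))
          + ∑ k ∈ range (m+1),
              (fun k => (m.choose k:ℚ)*(-1)^k*p.eval (k:ℚ)) (k+1) := by
      rw [← Finset.sum_sub_distrib, ← Finset.sum_add_distrib]
      apply Finset.sum_congr rfl
      intro k _
      simp only [Nat.choose_succ_succ]
      push_cast
      ring
    have h2 := (Finset.sum_range_succ' (fun k => (m.choose k:ℚ)*(-1)^k*p.eval (k:ℚ)) (m+1)).symm
    have h3 : ∑ k ∈ range (m+1+1), (m.choose k:ℚ)*(-1)^k*p.eval (k:ℚ)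
        = ∑ k ∈ range (m+1), (m.choose k:ℚ)*(-1)^k*p.eval (k:ℚ) := by
      rw [Finset.sum_range_succ, Nat.choose_succ_self]
      simp
    simp only at h1 h2 ⊢
    rw [h1]
    rw [h3] at h2
    simp only [Nat.choose_zero_right, Nat.choose_succ_succ] at *
    push_cast at h1 h2 hIH ⊢
    linarith [hIH, h2]

private lemma prod_desc15 (m : ℕ) : ∏ i ∈ Finset.range m, ((m:ℚ) - i) = m.factorial := by
  induction m with
  | zero => simp
  | succ m ih =>
    rw [Finset.prod_range_succ' (fun i => ((m+1:ℕ):ℚ) - i)]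
    push_cast
    have h : ∏ x ∈ Finset.range m, ((m:ℚ)+1 - ((x:ℚ)+1)) = ∏ x ∈ Finset.range m, ((m:ℚ) - x) :=
      Finset.prod_congr rfl fun x _ => by ring
    rw [h, ih, Nat.factorial_succ]
    push_cast
    ring

private lemma ndprod15 (s : Finset ℕ) (f : ℕ → ℚ) :
    (∏ i ∈ s, (X - C (f i))).natDegree = s.card := by
  rw [natDegree_prod_of_monic _ _ (fun i _ => monic_X_sub_C _)]
  simp [natDegree_X_sub_C]

/-- For all `n ≥ 1` and `0 ≤ μ ≤ n`:
`2·C(n,0) = ∑_{k=0}^{2n} C(2n,k)·(−1)^k·[k choose n]·[k−μ choose n]`. -/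
theorem stmt15 : ∀ n μ : ℕ, 1 ≤ n → μ ≤ n →
    2 * superCatalan n 0 =
      ∑ k ∈ Finset.range (2 * n + 1),
        ((2 * n).choose k : ℚ) * (-1 : ℚ) ^ k *
          genBinom (k : ℚ) n * genBinom ((k : ℚ) - (μ : ℚ)) n := by
  intro n μ _ _
  set P : ℚ[X] := (∏ i ∈ Finset.range n, (X - C (i:ℚ))) *
      (∏ i ∈ Finset.range n, (X - C ((μ:ℚ)+(i:ℚ)))) with hP
  set D : ℚ[X] := ∏ i ∈ Finset.range (2*n), (X - C (i:ℚ)) with hD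
  have hm1 : (∏ i ∈ Finset.range n, (X - C (i:ℚ))).Monic :=
    monic_prod_of_monic _ _ fun i _ => monic_X_sub_C _
  have hm2 : (∏ i ∈ Finset.range n, (X - C ((μ:ℚ)+(i:ℚ)))).Monic :=
    monic_prod_of_monic _ _ fun i _ => monic_X_sub_C _
  have hPm : P.Monic := hm1.mul hm2
  have hDm : D.Monic := monic_prod_of_monic _ _ fun i _ => monic_X_sub_C _
  have hPd : P.natDegree = 2*n := by
    rw [hP, natDegree_mul hm1.ne_zero hm2.ne_zero, ndprod15, ndprod15]
    simp; ring
  have hDd : D.natDegree = 2*n := by rw [hD, ndprod15]; simp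
  have hsub : (P - D).degree < ((2*n : ℕ) : WithBot ℕ) := by
    have := degree_sub_lt
      (by rw [degree_eq_natDegree hPm.ne_zero, degree_eq_natDegree hDm.ne_zero, hPd, hDd])
      hPm.ne_zero (hPm.leadingCoeff.trans hDm.leadingCoeff.symm)
    rwa [degree_eq_natDegree hPm.ne_zero, hPd] at this
  have key := alt_sum_zero15 (2*n) _ hsub
  have hDeval0 : ∀ k : ℕ, k < 2*n → D.eval (k:ℚ) = 0 := by
    intro k hk
    rw [hD, eval_prod]
    exact Finset.prod_eq_zero (Finset.mem_range.mpr hk) (by simp)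
  have hDevaltop : D.eval ((2*n : ℕ):ℚ) = (2*n).factorial := by
    rw [hD, eval_prod]
    simpa using prod_desc15 (2*n)
  have hDsum : ∑ k ∈ Finset.range (2*n+1), (((2*n).choose k : ℚ)) * (-1)^k * D.eval (k:ℚ)
      = (2*n).factorial := by
    rw [Finset.sum_range_succ]
    rw [Finset.sum_eq_zero (fun k hk => by
      rw [hDeval0 k (Finset.mem_range.mp hk), mul_zero])]
    push_cast at hDevaltop ⊢
    simp [hDevaltop, pow_mul]
  have hPsum : ∑ k ∈ Finset.range (2*n+1), (((2*n).choose k : ℚ)) * (-1)^k * P.eval (k:ℚ)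
      = (2*n).factorial := by
    have expand : ∀ k ∈ Finset.range (2*n+1),
        (((2*n).choose k : ℚ)) * (-1)^k * P.eval (k:ℚ)
        = (((2*n).choose k : ℚ)) * (-1)^k * (P-D).eval (k:ℚ)
          + (((2*n).choose k : ℚ)) * (-1)^k * D.eval (k:ℚ) := fun k _ => by
      rw [eval_sub]; ring
    rw [Finset.sum_congr rfl expand, Finset.sum_add_distrib, key, hDsum, zero_add]
  have hterm : ∀ k ∈ Finset.range (2*n+1),
      ((2 * n).choose k : ℚ) * (-1 : ℚ) ^ k *
          genBinom (k : ℚ) n * genBinom ((k : ℚ) - (μ : ℚ)) n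
      = (((2*n).choose k : ℚ)) * (-1)^k * P.eval (k:ℚ) / ((n.factorial:ℚ) * n.factorial) := by
    intro k _
    rw [genBinom, genBinom, hP, eval_mul, eval_prod, eval_prod]
    simp only [eval_sub, eval_X, eval_C]
    have h2 : ∏ i ∈ Finset.range n, ((k:ℚ) - (μ:ℚ) - i)
        = ∏ i ∈ Finset.range n, ((k:ℚ) - ((μ:ℚ)+(i:ℚ))) :=
      Finset.prod_congr rfl fun i _ => by ring
    rw [h2]
    field_simp
  rw [Finset.sum_congr rfl hterm, ← Finset.sum_div, hPsum]
  rw [superCatalan]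
  field_simp
  ring
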